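/- Let d ≥ 1, s, t > 0 with s + t ≥ 1, E ⊆ ℝ^d be a non-degenerate parallelepiped with lattice Λ_E, and let φ₀, ψ : ℝ^d → ℂ be continuous functions such that for some C, r₀ > 0: |φ₀(x)| ≤ C e^{-r₀|x|^{1/t}}, |ψ(x)| ≤ C e^{-r₀|x|^{1/t}}, and |V_{conj(φ₀)}ψ(x,η)| ≤ C e^{-r₀(|x|^{1/t}+|η|^{1/s})} for all x, η ∈ ℝ^d. Then the series ψ₀ = Σ_{k∈Λ_E} φ₀(·+k) ψ converges absolutely and uniformly on ℝ^d, and there exists r > 0 such that the tails ψ_N = Σ_{k∈Λ_E, |k|≥N} φ₀(·+k) ψ satisfy ‖ψ_N e^{r|·|^{1/t}}‖_{L^∞} + ‖ψ̂_N e^{r|·|^{1/s}}‖_{L^∞} → 0 as N → ∞. -/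

import Mathlib

open MeasureTheory Filter
open scoped BigOperators InnerProductSpace Topology

noncomputable section

abbrev Euc (d : ℕ) := EuclideanSpace ℝ (Fin d)

/-- The lattice point `∑ i, j i • e i` associated with `j : ℤ^d`. -/
def latPt {d : ℕ} (e : Fin d → Euc d) (j : Fin d → ℤ) : Euc d :=
  ∑ i, (j i : ℝ) • e i

/-- The (closed) parallelepiped spanned by `e`. -/
def paraSet {d : ℕ} (e : Fin d → Euc d) : Set (Euc d) :=
  (fun t : Fin d → ℝ => ∑ i, t i • e i) '' (Set.univ.pi fun _ => Set.Icc (0:ℝ) 1)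

/-- Fourier coefficient `c(f, ξ) = |E|⁻¹ ∫_E f(x) e^{-i⟨x,ξ⟩} dx`. -/
def fourCoeff {d : ℕ} (e : Fin d → Euc d) (f : Euc d → ℂ) (ξ : Euc d) : ℂ :=
  (((volume (paraSet e)).toReal : ℂ))⁻¹ *
    ∫ x in paraSet e, f x * Complex.exp (-(Complex.I) * (⟪x, ξ⟫_ℝ : ℂ))

/-- Iterated partial derivatives along a list of coordinate directions. -/
def pdSeq {d : ℕ} : List (Fin d) → (Euc d → ℂ) → (Euc d → ℂ)
  | [], f => f
  | (i :: L), f => pdSeq L (fun x => fderiv ℝ f x (EuclideanSpace.single i 1))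

/-- The canonical list of directions attached to a multi-index `β`. -/
def mIdxL {d : ℕ} (β : Fin d → ℕ) : List (Fin d) :=
  (List.finRange d).flatMap fun i => List.replicate (β i) i

/-- The multi-index partial derivative `∂^β f`. -/
def pD {d : ℕ} (β : Fin d → ℕ) (f : Euc d → ℂ) : Euc d → ℂ := pdSeq (mIdxL β) f

/-- Fourier transform, normalized as `(2π)^{-d/2} ∫ f(x) e^{-i⟨x,ξ⟩} dx`. -/
def FT {d : ℕ} (f : Euc d → ℂ) (ξ : Euc d) : ℂ :=
  (((2 * Real.pi) ^ (-(d:ℝ)/2) : ℝ) : ℂ) *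
    ∫ x, f x * Complex.exp (-(Complex.I) * (⟪x, ξ⟫_ℝ : ℂ))

/-- Short-time Fourier transform with window `φ`. -/
def STFT {d : ℕ} (φ f : Euc d → ℂ) (x ξ : Euc d) : ℂ :=
  (((2 * Real.pi) ^ (-(d:ℝ)/2) : ℝ) : ℂ) *
    ∫ y, f y * (starRingEnd ℂ) (φ (y - x)) * Complex.exp (-(Complex.I) * (⟪y, ξ⟫_ℝ : ℂ))


/-- The tail `ψ_N = Σ_{k ∈ Λ_E, |k| ≥ N} φ₀(·+k) ψ`. -/
def tailSum {d : ℕ} (e : Fin d → Euc d) (φ₀ ψ : Euc d → ℂ) (N : ℕ) (x : Euc d) : ℂ :=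
  ∑' j : {j : Fin d → ℤ // (N : ℝ) ≤ ‖latPt e j‖}, φ₀ (x + latPt e j.1) * ψ x

/-- for Gelfand–Shilov-type `φ₀, ψ`, the periodization series
`ψ₀ = Σ_{k ∈ Λ_E} φ₀(·+k) ψ` converges absolutely and uniformly, and the tails and their
Fourier transforms tend to `0` in the exponentially weighted sup-norms. -/
lemma aux_single_le_exp (x : ℝ) (hx : 0 ≤ x) (m : ℕ) :
    x ^ m / m.factorial ≤ Real.exp x := by
  have h := Real.sum_le_exp_of_nonneg hx (m + 1)
  refine le_trans ?_ h
  have h2 := Finset.single_le_sum (f := fun i => x ^ i / (i.factorial : ℝ))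
    (fun i _ => by positivity) (Finset.self_mem_range_succ m)
  simpa using h2

lemma aux_exp_decay (a p r : ℝ) (ha : 0 < a) (hp : 0 < p) (hr : 0 ≤ r) :
    ∃ K : ℝ, 0 < K ∧ ∀ u : ℝ, 0 ≤ u → Real.exp (-(a * u ^ p)) ≤ K * (1 + u) ^ (-r) := by
  obtain ⟨m, hm⟩ : ∃ m : ℕ, r ≤ p * m := by
    obtain ⟨m, hm⟩ := exists_nat_ge (r / p)
    exact ⟨m, by rwa [div_le_iff₀ hp, mul_comm] at hm⟩
  set K : ℝ := (2:ℝ) ^ r * (1 + m.factorial / a ^ m) with hKdef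
  have ham : (0:ℝ) < a ^ m := pow_pos ha m
  have hfm : (0:ℝ) < (m.factorial : ℝ) := by positivity
  have h2r : (0:ℝ) < (2:ℝ) ^ r := Real.rpow_pos_of_pos (by norm_num) r
  have hKpos : 0 < K := by positivity
  refine ⟨K, hKpos, fun u hu => ?_⟩
  have h1u : (0:ℝ) < 1 + u := by linarith
  have hX : 0 ≤ a * u ^ p := by positivity
  have key : (1 + u) ^ r ≤ K * Real.exp (a * u ^ p) := by
    have hexp1 : (1:ℝ) ≤ Real.exp (a * u ^ p) := Real.one_le_exp hX
    rcases le_total u 1 with h | h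
    · have h1 : (1 + u) ^ r ≤ (2:ℝ) ^ r :=
        Real.rpow_le_rpow h1u.le (by linarith) hr
      have h2 : (2:ℝ) ^ r ≤ K := by
        rw [hKdef]
        nlinarith [div_pos hfm ham]
      calc (1 + u) ^ r ≤ (2:ℝ) ^ r := h1
        _ = (2:ℝ) ^ r * 1 := by ring
        _ ≤ K * Real.exp (a * u ^ p) :=
            mul_le_mul h2 hexp1 one_pos.le hKpos.le
    · have hu1 : (0:ℝ) ≤ u := hu
      have e1 : (1 + u) ^ r ≤ (2 * u) ^ r :=
        Real.rpow_le_rpow h1u.le (by linarith) hr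
      have e2 : (2 * u) ^ r = (2:ℝ) ^ r * u ^ r :=
        Real.mul_rpow (by norm_num) hu1
      have e3 : u ^ r ≤ u ^ (p * m) := Real.rpow_le_rpow_of_exponent_le h hm
      have e4 : u ^ (p * (m:ℝ)) = (u ^ p) ^ m := by
        rw [Real.rpow_mul hu1, Real.rpow_natCast]
      have e5 : (u ^ p) ^ m ≤ m.factorial / a ^ m * Real.exp (a * u ^ p) := by
        have h6 := aux_single_le_exp (a * u ^ p) hX m
        rw [mul_pow] at h6
        rw [div_le_iff₀ hfm] at h6
        rw [← mul_le_mul_iff_right₀ ham]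
        calc a ^ m * (u ^ p) ^ m ≤ Real.exp (a * u ^ p) * m.factorial := h6
          _ = a ^ m * (m.factorial / a ^ m * Real.exp (a * u ^ p)) := by
              field_simp
      calc (1 + u) ^ r ≤ (2:ℝ) ^ r * u ^ r := by rw [← e2]; exact e1
        _ ≤ (2:ℝ) ^ r * (u ^ p) ^ m := by
            apply mul_le_mul_of_nonneg_left _ h2r.le
            calc u ^ r ≤ u ^ (p * (m:ℝ)) := e3
              _ = (u ^ p) ^ m := e4
        _ ≤ (2:ℝ) ^ r * (m.factorial / a ^ m * Real.exp (a * u ^ p)) :=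
            mul_le_mul_of_nonneg_left e5 h2r.le
        _ ≤ K * Real.exp (a * u ^ p) := by
            rw [hKdef]
            have hd : (0:ℝ) < m.factorial / a ^ m := div_pos hfm ham
            nlinarith
  rw [Real.exp_neg, Real.rpow_neg h1u.le]
  have h2 : (Real.exp (a * u ^ p))⁻¹ * (1 + u) ^ r ≤ K := by
    rw [inv_mul_le_iff₀ (Real.exp_pos _)]
    calc (1 + u) ^ r ≤ K * Real.exp (a * u ^ p) := key
      _ = Real.exp (a * u ^ p) * K := mul_comm _ _
  calc (Real.exp (a * u ^ p))⁻¹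
      = ((Real.exp (a * u ^ p))⁻¹ * (1 + u) ^ r) * ((1 + u) ^ r)⁻¹ := by
        field_simp
    _ ≤ K * ((1 + u) ^ r)⁻¹ :=
        mul_le_mul_of_nonneg_right h2 (by positivity)

lemma aux_summable_int (c p : ℝ) (hc : 0 < c) (hp : 0 < p) :
    Summable fun n : ℤ => Real.exp (-(c * |(n:ℝ)| ^ p)) := by
  obtain ⟨K, hK, hbound⟩ := aux_exp_decay c p 2 hc hp (by norm_num)
  have hnat : Summable fun n : ℕ => K * (1 + (n:ℝ)) ^ (-(2:ℝ)) := by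
    apply Summable.mul_left
    have h0 : Summable fun n : ℕ => (((n:ℝ)) ^ (2:ℝ))⁻¹ :=
      Real.summable_nat_rpow_inv.2 (by norm_num)
    have h1 := (summable_nat_add_iff 1).2 h0
    apply h1.congr
    intro n
    rw [Real.rpow_neg (by positivity)]
    congr 2
    push_cast
    ring
  have hZ : Summable fun n : ℤ => K * (1 + |(n:ℝ)|) ^ (-(2:ℝ)) := by
    apply Summable.of_nat_of_neg
    · apply hnat.congr; intro n; norm_num
    · apply hnat.congr; intro n
      have : |((-(n:ℤ) : ℤ) : ℝ)| = (n:ℝ) := by push_cast; simp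
      rw [this]
  exact Summable.of_nonneg_of_le (fun n => (Real.exp_pos _).le)
    (fun n => hbound |(n:ℝ)| (abs_nonneg _)) hZ

lemma aux_summable_pi (d : ℕ) (g : ℤ → ℝ) (hg0 : ∀ n, 0 ≤ g n) (hg : Summable g) :
    Summable fun j : Fin d → ℤ => ∏ i, g (j i) := by
  induction d with
  | zero => exact Summable.of_finite
  | succ n ih =>
    have hprod := hg.mul_of_nonneg ih hg0
      (fun x => Finset.prod_nonneg fun i _ => hg0 _)
    apply (Equiv.summable_iff (Fin.consEquiv fun _ : Fin (n+1) => ℤ)).1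
    apply hprod.congr
    intro x
    simp [Function.comp, Fin.consEquiv, Fin.prod_univ_succ]

lemma aux_latPt_norm {d : ℕ} (hd : 1 ≤ d) (e : Fin d → Euc d)
    (he : LinearIndependent ℝ e) :
    ∃ M : ℝ, 0 < M ∧ ∀ j : Fin d → ℤ,
      ‖(fun i => (j i : ℝ) : Fin d → ℝ)‖ ≤ M * ‖latPt e j‖ := by
  have : Nonempty (Fin d) := ⟨⟨0, hd⟩⟩
  have hcard : Fintype.card (Fin d) = Module.finrank ℝ (Euc d) := by
    simp [finrank_euclideanSpace]
  set b := basisOfLinearIndependentOfCardEqFinrank he hcard with hb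
  have hbe : ⇑b = e := coe_basisOfLinearIndependentOfCardEqFinrank he hcard
  set L : Euc d →L[ℝ] (Fin d → ℝ) := (b.equivFunL : Euc d →L[ℝ] (Fin d → ℝ)) with hL
  refine ⟨‖L‖ + 1, by positivity, fun j => ?_⟩
  have hlat : latPt e j = b.equivFun.symm (fun i => (j i : ℝ)) := by
    rw [Module.Basis.equivFun_symm_apply]
    unfold latPt
    congr 1
    ext i
    rw [hbe]
  have hLlat : L (latPt e j) = fun i => (j i : ℝ) := by
    rw [hlat]
    exact b.equivFun.apply_symm_apply _
  calc ‖(fun i => (j i : ℝ) : Fin d → ℝ)‖ = ‖L (latPt e j)‖ := by rw [hLlat]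
    _ ≤ ‖L‖ * ‖latPt e j‖ := L.le_opNorm _
    _ ≤ (‖L‖ + 1) * ‖latPt e j‖ := by
        apply mul_le_mul_of_nonneg_right (by linarith) (norm_nonneg _)

lemma aux_summable_lattice {d : ℕ} (hd : 1 ≤ d) (e : Fin d → Euc d)
    (he : LinearIndependent ℝ e) (c p : ℝ) (hc : 0 < c) (hp : 0 < p) :
    Summable fun j : Fin d → ℤ => Real.exp (-(c * ‖latPt e j‖ ^ p)) := by
  obtain ⟨M, hM, hMle⟩ := aux_latPt_norm hd e he
  have hMp : (0:ℝ) < M ^ p := Real.rpow_pos_of_pos hM p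
  have hd0 : (0:ℝ) < (d:ℝ) := by exact_mod_cast hd
  set c' : ℝ := c / ((d:ℝ) * M ^ p) with hc'
  have hc'pos : 0 < c' := div_pos hc (by positivity)
  have hkey : ∀ j : Fin d → ℤ, c' * (∑ i, |(j i : ℝ)| ^ p) ≤ c * ‖latPt e j‖ ^ p := by
    intro j
    set jR : Fin d → ℝ := fun i => (j i : ℝ) with hjR
    have h1 : ∀ i, |(j i : ℝ)| ^ p ≤ ‖jR‖ ^ p := by
      intro i
      apply Real.rpow_le_rpow (abs_nonneg _) _ hp.le
      have := norm_le_pi_norm jR i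
      rwa [Real.norm_eq_abs] at this
    have h2 : (∑ i, |(j i : ℝ)| ^ p) ≤ (d:ℝ) * ‖jR‖ ^ p := by
      calc (∑ i, |(j i : ℝ)| ^ p) ≤ ∑ _i : Fin d, ‖jR‖ ^ p :=
            Finset.sum_le_sum fun i _ => h1 i
        _ = (d:ℝ) * ‖jR‖ ^ p := by
            rw [Finset.sum_const, Finset.card_univ, Fintype.card_fin, nsmul_eq_mul]
    have h3 : ‖jR‖ ^ p ≤ M ^ p * ‖latPt e j‖ ^ p := by
      rw [← Real.mul_rpow hM.le (norm_nonneg _)]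
      exact Real.rpow_le_rpow (norm_nonneg _) (hMle j) hp.le
    have h4 : (∑ i, |(j i : ℝ)| ^ p) ≤ ((d:ℝ) * M ^ p) * ‖latPt e j‖ ^ p := by
      calc (∑ i, |(j i : ℝ)| ^ p) ≤ (d:ℝ) * ‖jR‖ ^ p := h2
        _ ≤ ((d:ℝ) * M ^ p) * ‖latPt e j‖ ^ p := by
            rw [mul_assoc]
            exact mul_le_mul_of_nonneg_left h3 hd0.le
    calc c' * (∑ i, |(j i : ℝ)| ^ p) ≤ c' * (((d:ℝ) * M ^ p) * ‖latPt e j‖ ^ p) :=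
          mul_le_mul_of_nonneg_left h4 hc'pos.le
      _ = c * ‖latPt e j‖ ^ p := by
          rw [hc']
          field_simp
  apply Summable.of_nonneg_of_le (fun j => (Real.exp_pos _).le) _
    (aux_summable_pi d (fun n => Real.exp (-(c' * |(n:ℝ)| ^ p)))
      (fun n => (Real.exp_pos _).le) (aux_summable_int c' p hc'pos hp))
  intro j
  rw [← Real.exp_sum]
  apply Real.exp_le_exp.2
  have : ∑ i, -(c' * |(j i : ℝ)| ^ p) = -(c' * ∑ i, |(j i : ℝ)| ^ p) := by
    rw [Finset.mul_sum]
    rw [← Finset.sum_neg_distrib]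
  rw [this]
  linarith [hkey j]

lemma aux_integrable_exp (d : ℕ) (a p : ℝ) (ha : 0 < a) (hp : 0 < p) :
    Integrable (fun x : Euc d => Real.exp (-(a * ‖x‖ ^ p))) := by
  obtain ⟨K, hK, hbound⟩ := aux_exp_decay a p ((d:ℝ)+1) ha hp (by positivity)
  have hfr : ((Module.finrank ℝ (Euc d) : ℝ)) < (d:ℝ) + 1 := by
    simp [finrank_euclideanSpace]
  have hint : Integrable (fun x : Euc d => K * (1 + ‖x‖) ^ (-((d:ℝ)+1))) :=
    (integrable_one_add_norm hfr).const_mul K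
  apply hint.mono'
  · apply Continuous.aestronglyMeasurable
    exact Real.continuous_exp.comp
      ((continuous_const.mul (continuous_norm.rpow_const (fun x => Or.inr hp.le))).neg)
  · refine ae_of_all _ fun x => ?_
    rw [Real.norm_eq_abs, abs_of_pos (Real.exp_pos _)]
    exact hbound ‖x‖ (norm_nonneg _)

set_option maxHeartbeats 1000000 in
theorem periodization_tails_tendsto_zero
    {d : ℕ} (hd : 1 ≤ d) (s t : ℝ) (hs : 0 < s) (ht : 0 < t) (hst : 1 ≤ s + t)
    (e : Fin d → Euc d) (he : LinearIndependent ℝ e)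
    (φ₀ ψ : Euc d → ℂ) (hφ₀c : Continuous φ₀) (hψc : Continuous ψ)
    (C r₀ : ℝ) (hC : 0 < C) (hr₀ : 0 < r₀)
    (hφ₀ : ∀ x : Euc d, ‖φ₀ x‖ ≤ C * Real.exp (-r₀ * ‖x‖ ^ (1/t)))
    (hψ : ∀ x : Euc d, ‖ψ x‖ ≤ C * Real.exp (-r₀ * ‖x‖ ^ (1/t)))
    (hV : ∀ x η : Euc d,
      ‖STFT (fun y => (starRingEnd ℂ) (φ₀ y)) ψ x η‖ ≤
        C * Real.exp (-r₀ * (‖x‖ ^ (1/t) + ‖η‖ ^ (1/s)))) :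
    (∀ x : Euc d, Summable fun j : Fin d → ℤ => ‖φ₀ (x + latPt e j) * ψ x‖) ∧
    TendstoUniformly
      (fun (F : Finset (Fin d → ℤ)) (x : Euc d) => ∑ j ∈ F, φ₀ (x + latPt e j) * ψ x)
      (fun x => ∑' j : Fin d → ℤ, φ₀ (x + latPt e j) * ψ x) atTop ∧
    ∃ r : ℝ, 0 < r ∧ ∀ ε : ℝ, 0 < ε → ∃ N₀ : ℕ, ∀ N : ℕ, N₀ ≤ N →
      (∀ x : Euc d, ‖tailSum e φ₀ ψ N x‖ * Real.exp (r * ‖x‖ ^ (1/t)) ≤ ε) ∧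
      (∀ ξ : Euc d, ‖FT (tailSum e φ₀ ψ N) ξ‖ * Real.exp (r * ‖ξ‖ ^ (1/s)) ≤ ε) := by
  have hp : (0:ℝ) < 1/t := by positivity
  have hq : (0:ℝ) < 1/s := by positivity
  set Kp : ℝ := (2:ℝ) ^ (1/t) with hKp_def
  have hKp1 : (1:ℝ) ≤ Kp := by
    rw [hKp_def]
    calc (1:ℝ) = (2:ℝ) ^ (0:ℝ) := by norm_num
      _ ≤ (2:ℝ) ^ (1/t) := Real.rpow_le_rpow_of_exponent_le (by norm_num) hp.le
  have hKp0 : (0:ℝ) < Kp := lt_of_lt_of_le one_pos hKp1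
  set c₁ : ℝ := r₀ / (2 * Kp) with hc₁_def
  have hc₁ : 0 < c₁ := by positivity
  have hc₁r : c₁ ≤ r₀ := by
    rw [hc₁_def, div_le_iff₀ (by positivity)]
    nlinarith
  have hsplit : ∀ x k : Euc d, ‖k‖ ^ (1/t) ≤ Kp * (‖x + k‖ ^ (1/t) + ‖x‖ ^ (1/t)) := by
    intro x k
    have h1 : ‖k‖ ≤ ‖x + k‖ + ‖x‖ := by
      calc ‖k‖ = ‖(x + k) - x‖ := by rw [add_sub_cancel_left]
        _ ≤ ‖x + k‖ + ‖x‖ := norm_sub_le _ _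
    have hAn : (0:ℝ) ≤ ‖x+k‖ := norm_nonneg _
    have hBn : (0:ℝ) ≤ ‖x‖ := norm_nonneg _
    have hApn : (0:ℝ) ≤ ‖x+k‖ ^ (1/t) := Real.rpow_nonneg hAn _
    have hBpn : (0:ℝ) ≤ ‖x‖ ^ (1/t) := Real.rpow_nonneg hBn _
    have h2 : ‖x+k‖ + ‖x‖ ≤ 2 * max ‖x+k‖ ‖x‖ := by
      rcases le_total ‖x+k‖ ‖x‖ with h|h
      · rw [max_eq_right h]; linarith
      · rw [max_eq_left h]; linarith
    have h3 : ‖k‖ ^ (1/t) ≤ (2 * max ‖x+k‖ ‖x‖) ^ (1/t) :=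
      Real.rpow_le_rpow (norm_nonneg _) (h1.trans h2) hp.le
    have h4 : (2 * max ‖x+k‖ ‖x‖) ^ (1/t) = Kp * (max ‖x+k‖ ‖x‖) ^ (1/t) := by
      rw [Real.mul_rpow (by norm_num) (le_max_of_le_left hAn)]
    have h5 : (max ‖x+k‖ ‖x‖) ^ (1/t) ≤ ‖x+k‖ ^ (1/t) + ‖x‖ ^ (1/t) := by
      rcases max_cases ‖x+k‖ ‖x‖ with ⟨hm, _⟩|⟨hm, _⟩ <;> rw [hm] <;> linarith
    calc ‖k‖ ^ (1/t) ≤ (2 * max ‖x+k‖ ‖x‖) ^ (1/t) := h3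
      _ = Kp * (max ‖x+k‖ ‖x‖) ^ (1/t) := h4
      _ ≤ Kp * (‖x+k‖ ^ (1/t) + ‖x‖ ^ (1/t)) := mul_le_mul_of_nonneg_left h5 hKp0.le
  set g : (Fin d → ℤ) → ℝ := fun j => Real.exp (-(c₁ * ‖latPt e j‖ ^ (1/t))) with hg_def
  have hgpos : ∀ j, 0 < g j := fun j => Real.exp_pos _
  have hg : Summable g := aux_summable_lattice hd e he c₁ (1/t) hc₁ hp
  have key : ∀ (j : Fin d → ℤ) (x : Euc d),
      ‖φ₀ (x + latPt e j) * ψ x‖ ≤ (C * C * g j) * Real.exp (-(r₀/2 * ‖x‖ ^ (1/t))) := by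
    intro j x
    set k : Euc d := latPt e j with hk
    set A : ℝ := ‖x + k‖ ^ (1/t) with hA
    set B : ℝ := ‖x‖ ^ (1/t) with hB
    have hAn : 0 ≤ A := Real.rpow_nonneg (norm_nonneg _) _
    have hBn : 0 ≤ B := Real.rpow_nonneg (norm_nonneg _) _
    have hkn : 0 ≤ ‖k‖ ^ (1/t) := Real.rpow_nonneg (norm_nonneg _) _
    have hmul : ‖φ₀ (x + k) * ψ x‖ ≤ (C * Real.exp (-r₀ * A)) * (C * Real.exp (-r₀ * B)) := by
      rw [norm_mul]
      exact mul_le_mul (hφ₀ _) (hψ _) (norm_nonneg _) (by positivity)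
    have heq : (C * Real.exp (-r₀ * A)) * (C * Real.exp (-r₀ * B))
        = C * C * Real.exp (-r₀ * A + -r₀ * B) := by
      rw [Real.exp_add]; ring
    have hle : -r₀ * A + -r₀ * B ≤ -(c₁ * ‖k‖ ^ (1/t)) + -(r₀/2 * B) := by
      have hsp := hsplit x k
      have h6 : c₁ * ‖k‖ ^ (1/t) ≤ r₀/2 * (A + B) := by
        rw [hc₁_def, div_mul_eq_mul_div, div_le_iff₀ (by positivity)]
        nlinarith
      nlinarith
    calc ‖φ₀ (x + k) * ψ x‖ ≤ C * C * Real.exp (-r₀ * A + -r₀ * B) := by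
          rw [← heq]; exact hmul
      _ ≤ C * C * Real.exp (-(c₁ * ‖k‖ ^ (1/t)) + -(r₀/2 * B)) :=
          mul_le_mul_of_nonneg_left (Real.exp_le_exp.2 hle) (by positivity)
      _ = (C * C * g j) * Real.exp (-(r₀/2 * B)) := by
          rw [hg_def, Real.exp_add]; ring
  have hexp_le_one : ∀ v : ℝ, 0 ≤ v → Real.exp (-v) ≤ 1 := by
    intro v hv
    calc Real.exp (-v) ≤ Real.exp 0 := Real.exp_le_exp.2 (by linarith)
      _ = 1 := Real.exp_zero
  have key2 : ∀ (j : Fin d → ℤ) (x : Euc d),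
      ‖φ₀ (x + latPt e j) * ψ x‖ ≤ C * C * g j := by
    intro j x
    refine (key j x).trans ?_
    have h1 : Real.exp (-(r₀/2 * ‖x‖ ^ (1/t))) ≤ 1 := hexp_le_one _ (by positivity)
    calc (C * C * g j) * Real.exp (-(r₀/2 * ‖x‖ ^ (1/t)))
        ≤ (C * C * g j) * 1 := by
          refine mul_le_mul_of_nonneg_left h1 ?_
          have := (hgpos j).le
          positivity
      _ = C * C * g j := mul_one _
  have hu : Summable (fun j => C * C * g j) := hg.mul_left _
  have hsum1 : ∀ x : Euc d, Summable fun j : Fin d → ℤ => ‖φ₀ (x + latPt e j) * ψ x‖ :=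
    fun x => Summable.of_nonneg_of_le (fun j => norm_nonneg _) (fun j => key2 j x) hu
  refine ⟨hsum1, tendstoUniformly_tsum hu (fun j x => key2 j x), r₀/2, by positivity, ?_⟩
  intro ε hε
  set D : ℝ := C*C + C + 1 with hD_def
  have hD0 : 0 < D := by positivity
  have hδ : 0 < ε / D := by positivity
  obtain ⟨F₀, hF₀⟩ : ∃ F₀ : Finset (Fin d → ℤ),
      (∑' j : {x : Fin d → ℤ // x ∉ F₀}, g j.1) < ε / D := by
    have h := tendsto_tsum_compl_atTop_zero g
    exact (h.eventually_lt_const hδ).exists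
  refine ⟨F₀.sup (fun j => ⌈‖latPt e j‖⌉₊) + 1, fun N hN => ?_⟩
  have hout : ∀ j : Fin d → ℤ, (N:ℝ) ≤ ‖latPt e j‖ → j ∉ F₀ := by
    intro j hj hjF
    have h1 : ‖latPt e j‖ ≤ (⌈‖latPt e j‖⌉₊ : ℝ) := Nat.le_ceil _
    have h2 : ⌈‖latPt e j‖⌉₊ ≤ F₀.sup (fun j => ⌈‖latPt e j‖⌉₊) := Finset.le_sup (f := fun j => ⌈‖latPt e j‖⌉₊) hjF
    have h3 : (N:ℝ) ≤ (F₀.sup (fun j => ⌈‖latPt e j‖⌉₊) : ℕ) := by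
      refine hj.trans (h1.trans ?_)
      exact_mod_cast h2
    have h4 : N ≤ F₀.sup (fun j => ⌈‖latPt e j‖⌉₊) := by exact_mod_cast h3
    omega
  set T : ℝ := ∑' j : {j : Fin d → ℤ // (N:ℝ) ≤ ‖latPt e j‖}, g j.1 with hT_def
  have hTsub : Summable (fun j : {j : Fin d → ℤ // (N:ℝ) ≤ ‖latPt e j‖} => g j.1) :=
    hg.subtype _
  have hT0 : 0 ≤ T := tsum_nonneg fun j => (hgpos _).le
  have hTlt : T < ε / D := by
    refine lt_of_le_of_lt ?_ hF₀
    exact Summable.tsum_le_tsum_of_inj (fun x => ⟨x.1, hout x.1 x.2⟩)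
      (fun a b hab => by
        apply Subtype.ext
        have h5 := congrArg Subtype.val hab
        simpa using h5)
      (fun c _ => (hgpos _).le) (fun b => le_rfl) hTsub (hg.subtype _)
  have hfin : ∀ a : ℝ, 0 ≤ a → a ≤ D → a * T ≤ ε := by
    intro a ha haD
    calc a * T ≤ a * (ε / D) := mul_le_mul_of_nonneg_left hTlt.le ha
      _ ≤ D * (ε / D) := mul_le_mul_of_nonneg_right haD hδ.le
      _ = ε := mul_div_cancel₀ ε hD0.ne'
  constructor
  · -- sup-norm bound
    intro x
    set w : ℝ := ‖x‖ ^ (1/t) with hw_def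
    have hwn : 0 ≤ w := Real.rpow_nonneg (norm_nonneg _) _
    have hsub : Summable (fun j : {j : Fin d → ℤ // (N:ℝ) ≤ ‖latPt e j‖} =>
        ‖φ₀ (x + latPt e j.1) * ψ x‖) := (hsum1 x).subtype _
    have h1 : ‖tailSum e φ₀ ψ N x‖ ≤
        ∑' j : {j : Fin d → ℤ // (N:ℝ) ≤ ‖latPt e j‖}, ‖φ₀ (x + latPt e j.1) * ψ x‖ :=
      norm_tsum_le_tsum_norm hsub
    have h2 : (∑' j : {j : Fin d → ℤ // (N:ℝ) ≤ ‖latPt e j‖}, ‖φ₀ (x + latPt e j.1) * ψ x‖)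
        ≤ ∑' j : {j : Fin d → ℤ // (N:ℝ) ≤ ‖latPt e j‖},
            (C * C * Real.exp (-(r₀/2 * w))) * g j.1 := by
      refine Summable.tsum_le_tsum (fun j => ?_) hsub ((hg.subtype _).mul_left _)
      calc ‖φ₀ (x + latPt e j.1) * ψ x‖ ≤ (C * C * g j.1) * Real.exp (-(r₀/2 * w)) :=
            key j.1 x
        _ = (C * C * Real.exp (-(r₀/2 * w))) * g j.1 := by ring
    rw [tsum_mul_left] at h2
    have h3 : ‖tailSum e φ₀ ψ N x‖ ≤ (C * C * Real.exp (-(r₀/2 * w))) * T := h1.trans h2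
    calc ‖tailSum e φ₀ ψ N x‖ * Real.exp (r₀/2 * w)
        ≤ ((C * C * Real.exp (-(r₀/2 * w))) * T) * Real.exp (r₀/2 * w) :=
          mul_le_mul_of_nonneg_right h3 (Real.exp_pos _).le
      _ = (C * C * T) * (Real.exp (-(r₀/2 * w)) * Real.exp (r₀/2 * w)) := by ring
      _ = (C * C) * T := by rw [← Real.exp_add]; simp
      _ ≤ ε := hfin _ (by positivity) (by nlinarith)
  · -- Fourier bound
    intro ξ
    set w : ℝ := ‖ξ‖ ^ (1/s) with hw_def
    have hwn : 0 ≤ w := Real.rpow_nonneg (norm_nonneg _) _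
    set cst : ℂ := (((2 * Real.pi) ^ (-(d:ℝ)/2) : ℝ) : ℂ) with hcst_def
    set ch : Euc d → ℂ := fun y => Complex.exp (-(Complex.I) * (⟪y, ξ⟫_ℝ : ℂ)) with hch_def
    have hch1 : ∀ y : Euc d, ‖ch y‖ = 1 := by
      intro y
      rw [hch_def]
      simp only [Complex.norm_exp]
      norm_num [Complex.mul_re]
    have hchc : Continuous ch := by
      rw [hch_def]
      exact Complex.continuous_exp.comp
        (continuous_const.mul (Complex.continuous_ofReal.comp
          (continuous_id.inner continuous_const)))
    set f : {j : Fin d → ℤ // (N:ℝ) ≤ ‖latPt e j‖} → Euc d → ℂ :=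
      fun j x => (φ₀ (x + latPt e j.1) * ψ x) * ch x with hf_def
    have hfnorm : ∀ j x, ‖f j x‖ = ‖φ₀ (x + latPt e j.1) * ψ x‖ := by
      intro j x
      rw [hf_def, norm_mul, hch1, mul_one]
    have hint0 : Integrable (fun x : Euc d => Real.exp (-(r₀/2 * ‖x‖ ^ (1/t)))) :=
      aux_integrable_exp d (r₀/2) (1/t) (by positivity) hp
    set I₀ : ℝ := ∫ x : Euc d, Real.exp (-(r₀/2 * ‖x‖ ^ (1/t))) with hI₀_def
    have hfi : ∀ j, Integrable (f j) := by
      intro j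
      apply (hint0.const_mul (C * C * g j.1)).mono'
      · apply Continuous.aestronglyMeasurable
        exact ((hφ₀c.comp (continuous_id.add continuous_const)).mul hψc).mul hchc
      · refine ae_of_all _ fun x => ?_
        rw [hfnorm]
        exact key j.1 x
    have hnormint : ∀ j : {j : Fin d → ℤ // (N:ℝ) ≤ ‖latPt e j‖}, (∫ x, ‖f j x‖) ≤
        (C * C * g j.1) * I₀ := by
      intro j
      rw [hI₀_def, ← integral_const_mul]
      refine integral_mono (hfi j).norm (hint0.const_mul _) fun x => ?_
      rw [hfnorm]
      exact key j.1 x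
    have hsumb : Summable fun j : {j : Fin d → ℤ // (N:ℝ) ≤ ‖latPt e j‖} =>
        (C * C * g j.1) * I₀ := ((hg.subtype _).mul_left (C * C)).mul_right I₀
    have hsumint : Summable fun j : {j : Fin d → ℤ // (N:ℝ) ≤ ‖latPt e j‖} =>
        ∫ x, ‖f j x‖ :=
      Summable.of_nonneg_of_le (fun j => integral_nonneg fun x => norm_nonneg _)
        (fun j => hnormint j) hsumb
    have hinter : FT (tailSum e φ₀ ψ N) ξ =
        ∑' j : {j : Fin d → ℤ // (N:ℝ) ≤ ‖latPt e j‖}, (cst * ∫ x, f j x) := by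
      have h0 : FT (tailSum e φ₀ ψ N) ξ = cst * ∫ x,
          (∑' j : {j : Fin d → ℤ // (N:ℝ) ≤ ‖latPt e j‖}, φ₀ (x + latPt e j.1) * ψ x)
            * ch x := rfl
      have h1 : (fun x => (∑' j : {j : Fin d → ℤ // (N:ℝ) ≤ ‖latPt e j‖},
          φ₀ (x + latPt e j.1) * ψ x) * ch x) = fun x =>
          ∑' j : {j : Fin d → ℤ // (N:ℝ) ≤ ‖latPt e j‖}, f j x := by
        funext x
        rw [hf_def, ← tsum_mul_right]
      rw [h0, h1, ← integral_tsum_of_summable_integral_norm hfi hsumint, tsum_mul_left]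
    have hSTFT : ∀ j : {j : Fin d → ℤ // (N:ℝ) ≤ ‖latPt e j‖},
        cst * (∫ x, f j x) = STFT (fun y => (starRingEnd ℂ) (φ₀ y)) ψ (-(latPt e j.1)) ξ := by
      intro j
      show cst * (∫ x, f j x) = cst * ∫ y,
        ψ y * (starRingEnd ℂ) ((fun y => (starRingEnd ℂ) (φ₀ y)) (y - -(latPt e j.1)))
          * Complex.exp (-(Complex.I) * (⟪y, ξ⟫_ℝ : ℂ))
      congr 1
      congr 1
      funext y
      rw [hf_def, hch_def]
      simp only [sub_neg_eq_add, RingHomCompTriple.comp_apply, RingHom.id_apply,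
        Complex.conj_conj]
      ring
    have hVb : ∀ j : {j : Fin d → ℤ // (N:ℝ) ≤ ‖latPt e j‖},
        ‖STFT (fun y => (starRingEnd ℂ) (φ₀ y)) ψ (-(latPt e j.1)) ξ‖
          ≤ (C * Real.exp (-(r₀ * w))) * g j.1 := by
      intro j
      have h7 := hV (-(latPt e j.1)) ξ
      rw [norm_neg] at h7
      refine h7.trans ?_
      have h8 : -r₀ * (‖latPt e j.1‖ ^ (1/t) + w)
          = -(r₀ * ‖latPt e j.1‖ ^ (1/t)) + -(r₀ * w) := by ring
      rw [h8, Real.exp_add]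
      have hkn : 0 ≤ ‖latPt e j.1‖ ^ (1/t) := Real.rpow_nonneg (norm_nonneg _) _
      have h9 : Real.exp (-(r₀ * ‖latPt e j.1‖ ^ (1/t))) ≤ g j.1 := by
        rw [hg_def]
        exact Real.exp_le_exp.2 (by nlinarith)
      calc C * (Real.exp (-(r₀ * ‖latPt e j.1‖ ^ (1/t))) * Real.exp (-(r₀ * w)))
          = (C * Real.exp (-(r₀ * w))) * Real.exp (-(r₀ * ‖latPt e j.1‖ ^ (1/t))) := by ring
        _ ≤ (C * Real.exp (-(r₀ * w))) * g j.1 :=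
            mul_le_mul_of_nonneg_left h9 (by positivity)
    have hsumSTFT : Summable (fun j : {j : Fin d → ℤ // (N:ℝ) ≤ ‖latPt e j‖} =>
        ‖STFT (fun y => (starRingEnd ℂ) (φ₀ y)) ψ (-(latPt e j.1)) ξ‖) :=
      Summable.of_nonneg_of_le (fun j => norm_nonneg _) hVb ((hg.subtype _).mul_left _)
    have h10 : ‖FT (tailSum e φ₀ ψ N) ξ‖ ≤ (C * Real.exp (-(r₀ * w))) * T := by
      rw [hinter, tsum_congr hSTFT]
      calc ‖∑' j : {j : Fin d → ℤ // (N:ℝ) ≤ ‖latPt e j‖},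
            STFT (fun y => (starRingEnd ℂ) (φ₀ y)) ψ (-(latPt e j.1)) ξ‖
          ≤ ∑' j : {j : Fin d → ℤ // (N:ℝ) ≤ ‖latPt e j‖},
            ‖STFT (fun y => (starRingEnd ℂ) (φ₀ y)) ψ (-(latPt e j.1)) ξ‖ :=
            norm_tsum_le_tsum_norm hsumSTFT
        _ ≤ ∑' j : {j : Fin d → ℤ // (N:ℝ) ≤ ‖latPt e j‖},
            (C * Real.exp (-(r₀ * w))) * g j.1 :=
            Summable.tsum_le_tsum hVb hsumSTFT ((hg.subtype _).mul_left _)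
        _ = (C * Real.exp (-(r₀ * w))) * T := tsum_mul_left
    calc ‖FT (tailSum e φ₀ ψ N) ξ‖ * Real.exp (r₀/2 * w)
        ≤ ((C * Real.exp (-(r₀ * w))) * T) * Real.exp (r₀/2 * w) :=
          mul_le_mul_of_nonneg_right h10 (Real.exp_pos _).le
      _ = (C * T) * (Real.exp (-(r₀ * w)) * Real.exp (r₀/2 * w)) := by ring
      _ = (C * T) * Real.exp (-(r₀/2 * w)) := by rw [← Real.exp_add]; ring_nf
      _ ≤ (C * T) * 1 :=
          mul_le_mul_of_nonneg_left (hexp_le_one _ (by positivity))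
            (mul_nonneg hC.le hT0)
      _ = C * T := mul_one _
      _ ≤ ε := hfin _ hC.le (by nlinarith)

end
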